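/- Let ω = Ω₁ ∪ Ω₂ be a partition of ω into two infinite sets, and let H = {g ∈ Sym(ω) : |g[Ω₁] △ Ω_i| < ℵ₀ for some i ∈ {1,2}}. Then H is a maximal proper subgroup of Sym(ω): H ≠ Sym(ω), and any subgroup of Sym(ω) properly containing H equals Sym(ω). -/

import Mathlib

open Set

lemma aux_equiv_nat (A : Set ℕ) (hA : A.Infinite) : Nonempty (↥A ≃ ℕ) := by
  have := hA.to_subtype
  exact nonempty_equiv_of_countable

lemma exists_perm_of_partition {ι : Type} (P Q : ι → Set ℕ)
    (hPd : ∀ i j, i ≠ j → Disjoint (P i) (P j))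
    (hQd : ∀ i j, i ≠ j → Disjoint (Q i) (Q j))
    (hPu : (⋃ i, P i) = Set.univ) (hQu : (⋃ i, Q i) = Set.univ)
    (hP : ∀ i, (P i).Infinite) (hQ : ∀ i, (Q i).Infinite) :
    ∃ π : Equiv.Perm ℕ, ∀ i, π '' P i = Q i := by
  classical
  have hPx : ∀ x : ℕ, ∃ i, x ∈ P i := fun x => Set.mem_iUnion.mp (hPu ▸ Set.mem_univ x)
  have hQx : ∀ x : ℕ, ∃ i, x ∈ Q i := fun x => Set.mem_iUnion.mp (hQu ▸ Set.mem_univ x)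
  choose idxP hidxP using hPx
  choose idxQ hidxQ using hQx
  have hPidx : ∀ x i, x ∈ P i → idxP x = i := by
    intro x i hx
    by_contra hne
    exact (hPd _ _ hne).le_bot ⟨hidxP x, hx⟩
  have hQidx : ∀ x i, x ∈ Q i → idxQ x = i := by
    intro x i hx
    by_contra hne
    exact (hQd _ _ hne).le_bot ⟨hidxQ x, hx⟩
  have ePi : ∀ i, {x // idxP x = i} ≃ ↥(P i) := fun i =>
    Equiv.subtypeEquivRight (fun x => ⟨fun h => h ▸ hidxP x, fun h => hPidx x i h⟩)
  have eQi : ∀ i, {x // idxQ x = i} ≃ ↥(Q i) := fun i =>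
    Equiv.subtypeEquivRight (fun x => ⟨fun h => h ▸ hidxQ x, fun h => hQidx x i h⟩)
  have eP : ∀ i, ↥(P i) ≃ ℕ := fun i => (aux_equiv_nat _ (hP i)).some
  have eQ : ∀ i, ↥(Q i) ≃ ℕ := fun i => (aux_equiv_nat _ (hQ i)).some
  let e : ∀ i, {x // idxP x = i} ≃ {x // idxQ x = i} := fun i =>
    ((ePi i).trans ((eP i).trans (eQ i).symm)).trans (eQi i).symm
  let π : Equiv.Perm ℕ :=
    (Equiv.sigmaFiberEquiv idxP).symm.trans
      ((Equiv.sigmaCongrRight e).trans (Equiv.sigmaFiberEquiv idxQ))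
  have hπ : ∀ x, idxQ (π x) = idxP x := fun x => (e (idxP x) ⟨x, rfl⟩).2
  refine ⟨π, fun i => ?_⟩
  apply Set.eq_of_subset_of_subset
  · rintro y ⟨x, hx, rfl⟩
    have h1 : idxP x = i := hPidx x i hx
    have := hidxQ (π x)
    rwa [hπ x, h1] at this
  · intro y hy
    have hyi : idxQ y = i := hQidx y i hy
    refine ⟨π.symm y, ?_, π.apply_symm_apply y⟩
    have h2 : idxQ (π (π.symm y)) = idxP (π.symm y) := hπ _
    rw [π.apply_symm_apply] at h2
    have := hidxP (π.symm y)
    rwa [← h2, hyi] at this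

lemma exists_split (A : Set ℕ) (hA : A.Infinite) :
    ∃ A₁ A₂ : Set ℕ, A₁ ∪ A₂ = A ∧ Disjoint A₁ A₂ ∧ A₁.Infinite ∧ A₂.Infinite := by
  classical
  obtain ⟨e⟩ := aux_equiv_nat A hA
  refine ⟨Subtype.val '' (e.symm '' {n | Even n}), Subtype.val '' (e.symm '' {n | ¬ Even n}),
    ?_, ?_, ?_, ?_⟩
  · rw [← Set.image_union, ← Set.image_union]
    have : {n : ℕ | Even n} ∪ {n : ℕ | ¬ Even n} = Set.univ :=
      Set.union_compl_self {n : ℕ | Even n}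
    rw [this, Set.image_univ, e.symm.range_eq_univ, Set.image_univ, Subtype.range_val]
  · apply Set.disjoint_image_of_injective Subtype.val_injective
    apply Set.disjoint_image_of_injective e.symm.injective
    exact Set.disjoint_left.mpr fun {n} h hn => hn h
  · refine Set.Infinite.image (Set.injOn_of_injective Subtype.val_injective)
      (Set.Infinite.image (Set.injOn_of_injective e.symm.injective) ?_)
    exact Set.infinite_of_injective_forall_mem (f := fun n : ℕ => 2 * n)
      (fun a b h => by dsimp at h; omega) (fun n => even_two_mul n)
  · refine Set.Infinite.image (Set.injOn_of_injective Subtype.val_injective)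
      (Set.Infinite.image (Set.injOn_of_injective e.symm.injective) ?_)
    exact Set.infinite_of_injective_forall_mem (f := fun n : ℕ => 2 * n + 1)
      (fun a b h => by dsimp at h; omega) (fun n => by simp [Nat.even_add_one, parity_simps])

lemma pairwise_fin4 {P : Fin 4 → Set ℕ} (h01 : Disjoint (P 0) (P 1))
    (h02 : Disjoint (P 0) (P 2)) (h03 : Disjoint (P 0) (P 3))
    (h12 : Disjoint (P 1) (P 2)) (h13 : Disjoint (P 1) (P 3))
    (h23 : Disjoint (P 2) (P 3)) :
    ∀ i j, i ≠ j → Disjoint (P i) (P j) := by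
  intro i j hij
  fin_cases i <;> fin_cases j <;>
    first
      | exact absurd rfl hij
      | assumption
      | (exact Disjoint.symm (by assumption))

lemma union_fin4 {P : Fin 4 → Set ℕ} (h : P 0 ∪ P 1 ∪ P 2 ∪ P 3 = Set.univ) :
    (⋃ i, P i) = Set.univ := by
  apply Set.eq_univ_of_univ_subset
  rw [← h]
  intro x hx
  rcases hx with ((h0 | h1) | h2) | h3
  · exact Set.mem_iUnion.mpr ⟨0, h0⟩
  · exact Set.mem_iUnion.mpr ⟨1, h1⟩
  · exact Set.mem_iUnion.mpr ⟨2, h2⟩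
  · exact Set.mem_iUnion.mpr ⟨3, h3⟩

lemma pairwise_fin3 {P : Fin 3 → Set ℕ} (h01 : Disjoint (P 0) (P 1))
    (h02 : Disjoint (P 0) (P 2)) (h12 : Disjoint (P 1) (P 2)) :
    ∀ i j, i ≠ j → Disjoint (P i) (P j) := by
  intro i j hij
  fin_cases i <;> fin_cases j <;>
    first
      | exact absurd rfl hij
      | assumption
      | (exact Disjoint.symm (by assumption))

lemma union_fin3 {P : Fin 3 → Set ℕ} (h : P 0 ∪ P 1 ∪ P 2 = Set.univ) :
    (⋃ i, P i) = Set.univ := by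
  apply Set.eq_univ_of_univ_subset
  rw [← h]
  intro x hx
  rcases hx with (h0 | h1) | h2
  · exact Set.mem_iUnion.mpr ⟨0, h0⟩
  · exact Set.mem_iUnion.mpr ⟨1, h1⟩
  · exact Set.mem_iUnion.mpr ⟨2, h2⟩

lemma cross_disj (X A : Set ℕ) :
    ∀ i j, i ≠ j → Disjoint ((![X ∩ A, X ∩ Aᶜ, Xᶜ ∩ A, Xᶜ ∩ Aᶜ] : Fin 4 → Set ℕ) i)
      (![X ∩ A, X ∩ Aᶜ, Xᶜ ∩ A, Xᶜ ∩ Aᶜ] j) := by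
  apply pairwise_fin4 <;>
    · simp only [Matrix.cons_val_zero, Matrix.cons_val_one, Matrix.head_cons,
        Matrix.cons_val_two, Matrix.tail_cons, Matrix.cons_val_three]
      rw [Set.disjoint_left]
      rintro x ⟨hx1, hx2⟩ ⟨hy1, hy2⟩
      first
        | exact hy2 hx2 | exact hx2 hy2 | exact hy1 hx1 | exact hx1 hy1

lemma cross_union (X A : Set ℕ) :
    (⋃ i, (![X ∩ A, X ∩ Aᶜ, Xᶜ ∩ A, Xᶜ ∩ Aᶜ] : Fin 4 → Set ℕ) i) = Set.univ := by
  apply union_fin4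
  simp only [Matrix.cons_val_zero, Matrix.cons_val_one, Matrix.head_cons,
    Matrix.cons_val_two, Matrix.tail_cons, Matrix.cons_val_three]
  ext x
  simp only [Set.mem_union, Set.mem_inter_iff, Set.mem_compl_iff, Set.mem_univ, iff_true]
  tauto

lemma exists_perm_cross (X A Y B : Set ℕ)
    (p1 : (X ∩ A).Infinite) (p2 : (X ∩ Aᶜ).Infinite)
    (p3 : (Xᶜ ∩ A).Infinite) (p4 : (Xᶜ ∩ Aᶜ).Infinite)
    (q1 : (Y ∩ B).Infinite) (q2 : (Y ∩ Bᶜ).Infinite)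
    (q3 : (Yᶜ ∩ B).Infinite) (q4 : (Yᶜ ∩ Bᶜ).Infinite) :
    ∃ π : Equiv.Perm ℕ, π '' (X ∩ A) = Y ∩ B ∧ π '' (X ∩ Aᶜ) = Y ∩ Bᶜ ∧
      π '' (Xᶜ ∩ A) = Yᶜ ∩ B ∧ π '' (Xᶜ ∩ Aᶜ) = Yᶜ ∩ Bᶜ := by
  obtain ⟨π, hπ⟩ := exists_perm_of_partition
    (![X ∩ A, X ∩ Aᶜ, Xᶜ ∩ A, Xᶜ ∩ Aᶜ]) (![Y ∩ B, Y ∩ Bᶜ, Yᶜ ∩ B, Yᶜ ∩ Bᶜ])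
    (cross_disj X A) (cross_disj Y B) (cross_union X A) (cross_union Y B)
    (by intro i; fin_cases i <;> simpa)
    (by intro i; fin_cases i <;> simpa)
  exact ⟨π, hπ 0, hπ 1, hπ 2, hπ 3⟩

lemma exists_perm_two (A B C D : Set ℕ)
    (hAB : Disjoint A B) (hCD : Disjoint C D)
    (hABu : A ∪ B = Set.univ) (hCDu : C ∪ D = Set.univ)
    (hA : A.Infinite) (hB : B.Infinite) (hC : C.Infinite) (hD : D.Infinite) :
    ∃ π : Equiv.Perm ℕ, π '' A = C ∧ π '' B = D := by
  obtain ⟨π, hπ⟩ := exists_perm_of_partition (ι := Bool)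
    (fun b => if b then A else B) (fun b => if b then C else D)
    (by rintro (_|_) (_|_) h <;> simp_all <;> first | exact hAB | exact hAB.symm)
    (by rintro (_|_) (_|_) h <;> simp_all <;> first | exact hCD | exact hCD.symm)
    (by ext x
        simp only [Set.mem_iUnion, Bool.exists_bool, if_true, if_false,
          Bool.false_eq_true, Set.mem_univ, iff_true]
        have hx : x ∈ A ∪ B := hABu ▸ Set.mem_univ x
        rcases hx with h | h
        · exact Or.inr h
        · exact Or.inl h)
    (by ext x
        simp only [Set.mem_iUnion, Bool.exists_bool, if_true, if_false,
          Bool.false_eq_true, Set.mem_univ, iff_true]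
        have hx : x ∈ C ∪ D := hCDu ▸ Set.mem_univ x
        rcases hx with h | h
        · exact Or.inr h
        · exact Or.inl h)
    (by rintro (_|_) <;> simpa)
    (by rintro (_|_) <;> simpa)
  exact ⟨π, by simpa using hπ true, by simpa using hπ false⟩

lemma exists_perm_three (P0 P1 P2 Q0 Q1 Q2 : Set ℕ)
    (hP01 : Disjoint P0 P1) (hP02 : Disjoint P0 P2) (hP12 : Disjoint P1 P2)
    (hQ01 : Disjoint Q0 Q1) (hQ02 : Disjoint Q0 Q2) (hQ12 : Disjoint Q1 Q2)
    (hPu : P0 ∪ P1 ∪ P2 = Set.univ) (hQu : Q0 ∪ Q1 ∪ Q2 = Set.univ)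
    (hp0 : P0.Infinite) (hp1 : P1.Infinite) (hp2 : P2.Infinite)
    (hq0 : Q0.Infinite) (hq1 : Q1.Infinite) (hq2 : Q2.Infinite) :
    ∃ π : Equiv.Perm ℕ, π '' P0 = Q0 ∧ π '' P1 = Q1 ∧ π '' P2 = Q2 := by
  obtain ⟨π, hπ⟩ := exists_perm_of_partition (![P0, P1, P2]) (![Q0, Q1, Q2])
    (pairwise_fin3 (by simpa) (by simpa) (by simpa))
    (pairwise_fin3 (by simpa) (by simpa) (by simpa))
    (union_fin3 (by simpa))
    (union_fin3 (by simpa))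
    (by intro i; fin_cases i <;> simpa)
    (by intro i; fin_cases i <;> simpa)
  exact ⟨π, hπ 0, hπ 1, hπ 2⟩

lemma inf_right {X Y : Set ℕ} (h : (X ∪ Y).Infinite) (hX : X.Finite) : Y.Infinite := by
  by_contra hY
  rw [Set.not_infinite] at hY
  exact h (hX.union hY)

lemma inf_left {X Y : Set ℕ} (h : (X ∪ Y).Infinite) (hY : Y.Finite) : X.Infinite := by
  by_contra hX
  rw [Set.not_infinite] at hX
  exact h (hX.union hY)
lemma exists_split_pair (A S : Set ℕ) (hA : A.Infinite) :
    ∃ U₁ U₂ : Set ℕ, U₁ ∪ U₂ = A ∧ Disjoint U₁ U₂ ∧ U₁.Infinite ∧ U₂.Infinite ∧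
      ((S ∩ A).Infinite → (S ∩ U₁).Infinite ∧ (S ∩ U₂).Infinite) ∧
      ((Sᶜ ∩ A).Infinite → (Sᶜ ∩ U₁).Infinite ∧ (Sᶜ ∩ U₂).Infinite) := by
  classical
  have hAeq : (S ∩ A) ∪ (Sᶜ ∩ A) = A := by
    ext x; simp only [Set.mem_union, Set.mem_inter_iff, Set.mem_compl_iff]; tauto
  by_cases hSA : (S ∩ A).Finite
  · -- Sᶜ ∩ A infinite
    have hScA : (Sᶜ ∩ A).Infinite := inf_right (by rw [hAeq]; exact hA) hSA
    obtain ⟨T₁, T₂, hTu, hTd, hT₁, hT₂⟩ := exists_split _ hScA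
    have hT₁s : T₁ ⊆ Sᶜ ∩ A := hTu ▸ Set.subset_union_left
    have hT₂s : T₂ ⊆ Sᶜ ∩ A := hTu ▸ Set.subset_union_right
    refine ⟨T₁, T₂ ∪ (S ∩ A), ?_, ?_, hT₁, hT₂.mono Set.subset_union_left, ?_, ?_⟩
    · rw [← Set.union_assoc, hTu, Set.union_comm, hAeq]
    · refine Set.disjoint_union_right.mpr ⟨hTd, ?_⟩
      exact Set.disjoint_left.mpr fun x hx hx' => (hT₁s hx).1 hx'.1
    · intro h; exact absurd h (Set.not_infinite.mpr hSA)
    · intro _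
      constructor
      · exact hT₁.mono (Set.subset_inter (fun x hx => (hT₁s hx).1) Set.Subset.rfl)
      · exact hT₂.mono (Set.subset_inter (fun x hx => (hT₂s hx).1)
          (Set.Subset.rfl.trans Set.subset_union_left))
  · by_cases hScA : (Sᶜ ∩ A).Finite
    · have hSA' : (S ∩ A).Infinite := hSA
      obtain ⟨P₁, P₂, hPu, hPd, hP₁, hP₂⟩ := exists_split _ hSA'
      have hP₁s : P₁ ⊆ S ∩ A := hPu ▸ Set.subset_union_left
      have hP₂s : P₂ ⊆ S ∩ A := hPu ▸ Set.subset_union_right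
      refine ⟨P₁, P₂ ∪ (Sᶜ ∩ A), ?_, ?_, hP₁, hP₂.mono Set.subset_union_left, ?_, ?_⟩
      · rw [← Set.union_assoc, hPu, hAeq]
      · refine Set.disjoint_union_right.mpr ⟨hPd, ?_⟩
        exact Set.disjoint_left.mpr fun x hx hx' => hx'.1 ((hP₁s hx).1)
      · intro _
        constructor
        · exact hP₁.mono (Set.subset_inter (fun x hx => (hP₁s hx).1) Set.Subset.rfl)
        · exact hP₂.mono (Set.subset_inter (fun x hx => (hP₂s hx).1)
            (Set.Subset.rfl.trans Set.subset_union_left))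
      · intro h; exact absurd h (Set.not_infinite.mpr hScA)
    · -- both infinite
      have hSA' : (S ∩ A).Infinite := hSA
      have hScA' : (Sᶜ ∩ A).Infinite := hScA
      obtain ⟨P₁, P₂, hPu, hPd, hP₁, hP₂⟩ := exists_split _ hSA'
      obtain ⟨T₁, T₂, hTu, hTd, hT₁, hT₂⟩ := exists_split _ hScA'
      have hP₁s : P₁ ⊆ S ∩ A := hPu ▸ Set.subset_union_left
      have hP₂s : P₂ ⊆ S ∩ A := hPu ▸ Set.subset_union_right
      have hT₁s : T₁ ⊆ Sᶜ ∩ A := hTu ▸ Set.subset_union_left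
      have hT₂s : T₂ ⊆ Sᶜ ∩ A := hTu ▸ Set.subset_union_right
      refine ⟨P₁ ∪ T₁, P₂ ∪ T₂, ?_, ?_, hP₁.mono Set.subset_union_left,
        hP₂.mono Set.subset_union_left, ?_, ?_⟩
      · rw [show (P₁ ∪ T₁) ∪ (P₂ ∪ T₂) = (P₁ ∪ P₂) ∪ (T₁ ∪ T₂) by
          rw [Set.union_assoc, Set.union_assoc]; congr 1; rw [← Set.union_assoc,
            ← Set.union_assoc, Set.union_comm T₁ P₂], hPu, hTu, hAeq]
      · rw [Set.disjoint_union_left]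
        constructor
        · refine Set.disjoint_union_right.mpr ⟨hPd, ?_⟩
          exact Set.disjoint_left.mpr fun x hx hx' => (hT₂s hx').1 ((hP₁s hx).1)
        · refine Set.disjoint_union_right.mpr ⟨?_, hTd⟩
          exact Set.disjoint_left.mpr fun x hx hx' => (hT₁s hx).1 ((hP₂s hx').1)
      · intro _
        exact ⟨hP₁.mono (Set.subset_inter (fun x hx => (hP₁s hx).1)
            Set.subset_union_left),
          hP₂.mono (Set.subset_inter (fun x hx => (hP₂s hx).1) Set.subset_union_left)⟩
      · intro _
        exact ⟨hT₁.mono (Set.subset_inter (fun x hx => (hT₁s hx).1)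
            Set.subset_union_right),
          hT₂.mono (Set.subset_inter (fun x hx => (hT₂s hx).1) Set.subset_union_right)⟩

lemma exists_M (Ω₁ Ω₂ G : Set ℕ) (h1 : Ω₁.Infinite) (h2 : Ω₂.Infinite)
    (hu : Ω₁ ∪ Ω₂ = Set.univ) (hd : Disjoint Ω₁ Ω₂)
    (hG : G.Infinite) (hGc : Gᶜ.Infinite) :
    ∃ M : Set ℕ, (M ∩ Ω₁).Infinite ∧ (M ∩ Ω₂).Infinite ∧
      (Mᶜ ∩ Ω₁).Infinite ∧ (Mᶜ ∩ Ω₂).Infinite ∧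
      (G ∩ M).Infinite ∧ (G ∩ Mᶜ).Infinite ∧ (Gᶜ ∩ M).Infinite ∧ (Gᶜ ∩ Mᶜ).Infinite := by
  classical
  obtain ⟨U₁, U₂, hUu, hUd, hU₁, hU₂, hUS, hUSc⟩ := exists_split_pair Ω₁ G h1
  obtain ⟨V₁, V₂, hVu, hVd, hV₁, hV₂, hVS, hVSc⟩ := exists_split_pair Ω₂ G h2
  have hU₁s : U₁ ⊆ Ω₁ := hUu ▸ Set.subset_union_left
  have hU₂s : U₂ ⊆ Ω₁ := hUu ▸ Set.subset_union_right
  have hV₁s : V₁ ⊆ Ω₂ := hVu ▸ Set.subset_union_left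
  have hV₂s : V₂ ⊆ Ω₂ := hVu ▸ Set.subset_union_right
  refine ⟨U₁ ∪ V₁, ?_, ?_, ?_, ?_, ?_, ?_, ?_, ?_⟩
  · exact hU₁.mono (Set.subset_inter Set.subset_union_left hU₁s)
  · exact hV₁.mono (Set.subset_inter Set.subset_union_right hV₁s)
  · refine hU₂.mono (Set.subset_inter ?_ hU₂s)
    intro x hx
    simp only [Set.mem_compl_iff, Set.mem_union, not_or]
    exact ⟨fun h => (Set.disjoint_left.mp hUd) h hx,
      fun h => (Set.disjoint_left.mp hd) (hU₂s hx) (hV₁s h)⟩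
  · refine hV₂.mono (Set.subset_inter ?_ hV₂s)
    intro x hx
    simp only [Set.mem_compl_iff, Set.mem_union, not_or]
    exact ⟨fun h => (Set.disjoint_left.mp hd) (hU₁s h) (hV₂s hx),
      fun h => (Set.disjoint_left.mp hVd) h hx⟩
  · -- G ∩ M infinite
    have : (G ∩ Ω₁).Infinite ∨ (G ∩ Ω₂).Infinite := by
      by_contra hcon
      push_neg at hcon
      have : G = (G ∩ Ω₁) ∪ (G ∩ Ω₂) := by
        rw [← Set.inter_union_distrib_left, hu, Set.inter_univ]
      exact hG (this ▸ hcon.1.union hcon.2)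
    rcases this with h | h
    · exact ((hUS h).1).mono (Set.inter_subset_inter_right _ Set.subset_union_left)
    · exact ((hVS h).1).mono (Set.inter_subset_inter_right _ Set.subset_union_right)
  · have : (G ∩ Ω₁).Infinite ∨ (G ∩ Ω₂).Infinite := by
      by_contra hcon
      push_neg at hcon
      have : G = (G ∩ Ω₁) ∪ (G ∩ Ω₂) := by
        rw [← Set.inter_union_distrib_left, hu, Set.inter_univ]
      exact hG (this ▸ hcon.1.union hcon.2)
    rcases this with h | h
    · refine ((hUS h).2).mono (Set.inter_subset_inter_right _ ?_)
      intro x hx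
      simp only [Set.mem_compl_iff, Set.mem_union, not_or]
      exact ⟨fun hh => (Set.disjoint_left.mp hUd) hh hx,
        fun hh => (Set.disjoint_left.mp hd) (hU₂s hx) (hV₁s hh)⟩
    · refine ((hVS h).2).mono (Set.inter_subset_inter_right _ ?_)
      intro x hx
      simp only [Set.mem_compl_iff, Set.mem_union, not_or]
      exact ⟨fun hh => (Set.disjoint_left.mp hd) (hU₁s hh) (hV₂s hx),
        fun hh => (Set.disjoint_left.mp hVd) hh hx⟩
  · have : (Gᶜ ∩ Ω₁).Infinite ∨ (Gᶜ ∩ Ω₂).Infinite := by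
      by_contra hcon
      push_neg at hcon
      have : Gᶜ = (Gᶜ ∩ Ω₁) ∪ (Gᶜ ∩ Ω₂) := by
        rw [← Set.inter_union_distrib_left, hu, Set.inter_univ]
      exact hGc (this ▸ hcon.1.union hcon.2)
    rcases this with h | h
    · exact ((hUSc h).1).mono (Set.inter_subset_inter_right _ Set.subset_union_left)
    · exact ((hVSc h).1).mono (Set.inter_subset_inter_right _ Set.subset_union_right)
  · have : (Gᶜ ∩ Ω₁).Infinite ∨ (Gᶜ ∩ Ω₂).Infinite := by
      by_contra hcon
      push_neg at hcon
      have : Gᶜ = (Gᶜ ∩ Ω₁) ∪ (Gᶜ ∩ Ω₂) := by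
        rw [← Set.inter_union_distrib_left, hu, Set.inter_univ]
      exact hGc (this ▸ hcon.1.union hcon.2)
    rcases this with h | h
    · refine ((hUSc h).2).mono (Set.inter_subset_inter_right _ ?_)
      intro x hx
      simp only [Set.mem_compl_iff, Set.mem_union, not_or]
      exact ⟨fun hh => (Set.disjoint_left.mp hUd) hh hx,
        fun hh => (Set.disjoint_left.mp hd) (hU₂s hx) (hV₁s hh)⟩
    · refine ((hVSc h).2).mono (Set.inter_subset_inter_right _ ?_)
      intro x hx
      simp only [Set.mem_compl_iff, Set.mem_union, not_or]
      exact ⟨fun hh => (Set.disjoint_left.mp hd) (hU₁s hh) (hV₂s hx),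
        fun hh => (Set.disjoint_left.mp hVd) hh hx⟩

set_option maxHeartbeats 2000000 in
/-- If `ω = Ω₁ ∪ Ω₂` is a partition into two infinite sets and `H` is the
subgroup `{g ∈ Sym(ω) : |g[Ω₁] △ Ω_i| < ℵ₀ for some i ∈ {1,2}}`, then `H` is a
maximal proper subgroup of `Sym(ω)`. -/
theorem stmt_4 (Ω₁ Ω₂ : Set ℕ) (h1 : Ω₁.Infinite) (h2 : Ω₂.Infinite)
    (hu : Ω₁ ∪ Ω₂ = Set.univ) (hd : Disjoint Ω₁ Ω₂)
    (H : Subgroup (Equiv.Perm ℕ))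
    (hH : (H : Set (Equiv.Perm ℕ)) =
      {g : Equiv.Perm ℕ |
        (symmDiff (⇑g '' Ω₁) Ω₁).Finite ∨ (symmDiff (⇑g '' Ω₁) Ω₂).Finite}) :
    H ≠ ⊤ ∧ ∀ K : Subgroup (Equiv.Perm ℕ), H < K → K = ⊤ := by
  classical
  have hall : ∀ x : ℕ, x ∈ Ω₁ ∨ x ∈ Ω₂ := fun x => by
    have hx : x ∈ Ω₁ ∪ Ω₂ := by rw [hu]; trivial
    exact hx
  have hc : Ω₂ = Ω₁ᶜ := by
    ext x
    constructor
    · intro hx hx1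
      exact (Set.disjoint_left.mp hd) hx1 hx
    · intro hx
      rcases hall x with h | h
      · exact absurd h hx
      · exact h
  have memH : ∀ g : Equiv.Perm ℕ,
      g ∈ H ↔ (symmDiff (⇑g '' Ω₁) Ω₁).Finite ∨ (symmDiff (⇑g '' Ω₁) Ω₂).Finite := by
    intro g
    rw [← SetLike.mem_coe, hH]
    exact Iff.rfl
  have imginf : ∀ (g : Equiv.Perm ℕ) (s : Set ℕ), s.Infinite → (⇑g '' s).Infinite :=
    fun g s hs => Set.Infinite.image (g.injective.injOn) hs
  have imgc : ∀ (g : Equiv.Perm ℕ) (s : Set ℕ), ⇑g '' sᶜ = (⇑g '' s)ᶜ :=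
    fun g s => Set.image_compl_eq g.bijective
  have invc1 : ∀ (g : Equiv.Perm ℕ) (X : Set ℕ), ⇑g '' (⇑g⁻¹ '' X) = X :=
    fun g X => g.image_symm_image X
  have invc2 : ∀ (g : Equiv.Perm ℕ) (X : Set ℕ), ⇑g⁻¹ '' (⇑g '' X) = X :=
    fun g X => g.symm_image_image X
  have memH1 : ∀ g : Equiv.Perm ℕ, ⇑g '' Ω₁ = Ω₁ → g ∈ H := fun g hg =>
    (memH g).mpr (Or.inl (by rw [hg]; simp))
  have memH2 : ∀ g : Equiv.Perm ℕ, ⇑g '' Ω₁ = Ω₂ → g ∈ H := fun g hg =>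
    (memH g).mpr (Or.inr (by rw [hg]; simp))
  constructor
  · -- H ≠ ⊤
    obtain ⟨A, A', hAu, hAd, hAi, hA'i⟩ := exists_split Ω₁ h1
    obtain ⟨C, C', hCu, hCd, hCi, hC'i⟩ := exists_split Ω₂ h2
    have hAs : A ⊆ Ω₁ := hAu ▸ Set.subset_union_left
    have hA's : A' ⊆ Ω₁ := hAu ▸ Set.subset_union_right
    have hCs : C ⊆ Ω₂ := hCu ▸ Set.subset_union_left
    have hC's : C' ⊆ Ω₂ := hCu ▸ Set.subset_union_right
    obtain ⟨g₀, hg₀⟩ := exists_perm_of_partition (ι := Fin 4)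
      ![A, A', C, C'] ![A, C, A', C']
      (pairwise_fin4 (by simpa using hAd) (by simpa using hd.mono hAs hCs)
        (by simpa using hd.mono hAs hC's) (by simpa using hd.mono hA's hCs)
        (by simpa using hd.mono hA's hC's) (by simpa using hCd))
      (pairwise_fin4 (by simpa using hd.mono hAs hCs) (by simpa using hAd)
        (by simpa using hd.mono hAs hC's) (by simpa using (hd.mono hA's hCs).symm)
        (by simpa using hCd) (by simpa using hd.mono hA's hC's))
      (union_fin4 (by
        simp only [Matrix.cons_val_zero, Matrix.cons_val_one, Matrix.head_cons,
          Matrix.cons_val_two, Matrix.tail_cons, Matrix.cons_val_three]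
        rw [hAu, Set.union_assoc, hCu, hu]))
      (union_fin4 (by
        simp only [Matrix.cons_val_zero, Matrix.cons_val_one, Matrix.head_cons,
          Matrix.cons_val_two, Matrix.tail_cons, Matrix.cons_val_three]
        ext x
        simp only [Set.mem_union, Set.mem_univ, iff_true]
        rcases hall x with h | h
        · rw [← hAu] at h
          rcases h with h | h
          · tauto
          · tauto
        · rw [← hCu] at h
          rcases h with h | h
          · tauto
          · tauto))
      (by intro i; fin_cases i <;> simpa)
      (by intro i; fin_cases i <;> simpa)
    have e0 : ⇑g₀ '' A = A := by simpa using hg₀ 0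
    have e1 : ⇑g₀ '' A' = C := by simpa using hg₀ 1
    have himg : ⇑g₀ '' Ω₁ = A ∪ C := by rw [← hAu, Set.image_union, e0, e1]
    intro htop
    have hg₀H : g₀ ∈ H := by rw [htop]; trivial
    rcases (memH g₀).mp hg₀H with hfin | hfin
    · rw [himg, Set.symmDiff_def] at hfin
      refine hCi (hfin.subset fun x hx => Or.inl ⟨Or.inr hx, fun hx1 => ?_⟩)
      exact (Set.disjoint_left.mp hd) hx1 (hCs hx)
    · rw [himg, Set.symmDiff_def] at hfin
      refine hAi (hfin.subset fun x hx => Or.inl ⟨Or.inl hx, fun hx2 => ?_⟩)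
      exact (Set.disjoint_left.mp hd) (hAs hx) hx2
  · intro K hK
    have hHK : H ≤ K := le_of_lt hK
    obtain ⟨k, hkK, hkH⟩ := SetLike.exists_of_lt hK
    have keylem : ∀ u g : Equiv.Perm ℕ, u ∈ K → ⇑g '' Ω₁ = ⇑u '' Ω₁ → g ∈ K := by
      intro u g huK heq
      have hy1 : ⇑(u⁻¹ * g) '' Ω₁ = Ω₁ := by
        rw [Equiv.Perm.coe_mul, Set.image_comp, heq]
        simp
      have hy2 : u⁻¹ * g ∈ K := hHK (memH1 _ hy1)
      have hy3 := K.mul_mem huK hy2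
      simpa using hy3
    -- lemE : from an element whose image has the right three infinite pieces,
    -- produce an element of K with all four pieces infinite
    have lemE : ∀ k' : Equiv.Perm ℕ, k' ∈ K →
        ((⇑k' '' Ω₁) ∩ Ω₁).Infinite → ((⇑k' '' Ω₁) ∩ Ω₂).Infinite →
        ((⇑k' '' Ω₁)ᶜ ∩ Ω₂).Infinite →
        ∃ t : Equiv.Perm ℕ, t ∈ K ∧ ((⇑t '' Ω₁) ∩ Ω₁).Infinite ∧
          ((⇑t '' Ω₁) ∩ Ω₂).Infinite ∧ ((⇑t '' Ω₁)ᶜ ∩ Ω₁).Infinite ∧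
          ((⇑t '' Ω₁)ᶜ ∩ Ω₂).Infinite := by
      intro k' hk'K hi11 hi12 hi22
      set B' := ⇑k' '' Ω₁ with hB'
      have hinvB' : ⇑k'⁻¹ '' B' = Ω₁ := by rw [hB']; simp
      set p := ⇑k'⁻¹ '' (B' ∩ Ω₁) with hp
      set q := ⇑k'⁻¹ '' (B' ∩ Ω₂) with hq
      have hpinf : p.Infinite := imginf _ _ hi11
      have hqinf : q.Infinite := imginf _ _ hi12
      obtain ⟨p₁, p₂, hpu, hpd, hp₁, hp₂⟩ := exists_split _ hpinf
      obtain ⟨q₁, q₂, hqu, hqd, hq₁, hq₂⟩ := exists_split _ hqinf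
      have hp₁p : p₁ ⊆ p := hpu ▸ Set.subset_union_left
      have hp₂p : p₂ ⊆ p := hpu ▸ Set.subset_union_right
      have hq₁q : q₁ ⊆ q := hqu ▸ Set.subset_union_left
      have hq₂q : q₂ ⊆ q := hqu ▸ Set.subset_union_right
      have hpsub : p ⊆ Ω₁ := by
        rw [hp, ← hinvB']
        exact Set.image_mono Set.inter_subset_left
      have hqsub : q ⊆ Ω₁ := by
        rw [hq, ← hinvB']
        exact Set.image_mono Set.inter_subset_left
      have hpqd : Disjoint p q :=
        Set.disjoint_image_of_injective k'⁻¹.injective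
          (hd.mono Set.inter_subset_right Set.inter_subset_right)
      set S₁ := p₁ ∪ q₁ with hS₁
      have hS₁sub : S₁ ⊆ Ω₁ :=
        Set.union_subset (hp₁p.trans hpsub) (hq₁q.trans hqsub)
      have hS₁inf : S₁.Infinite := hp₁.mono Set.subset_union_left
      have hp₂S : Disjoint p₂ S₁ :=
        Set.disjoint_union_right.mpr ⟨hpd.symm, hpqd.mono hp₂p hq₁q⟩
      have hq₂S : Disjoint q₂ S₁ :=
        Set.disjoint_union_right.mpr ⟨(hpqd.symm.mono hq₂q hp₁p), hqd.symm⟩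
      -- construct s
      have hBO2sub : B' ∩ Ω₂ ⊆ Ω₂ := Set.inter_subset_right
      obtain ⟨s, hs0, hs1, hs2⟩ := exists_perm_three
        Ω₁ (B' ∩ Ω₂) (Ω₂ \ (B' ∩ Ω₂)) Ω₂ S₁ (Ω₁ \ S₁)
        (hd.mono_right hBO2sub) (hd.mono_right Set.diff_subset)
        Set.disjoint_sdiff_right
        (hd.symm.mono_right hS₁sub) (hd.symm.mono_right Set.diff_subset)
        Set.disjoint_sdiff_right
        (by rw [Set.union_assoc, Set.union_diff_cancel hBO2sub, hu])
        (by rw [Set.union_assoc, Set.union_diff_cancel hS₁sub, Set.union_comm, hu])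
        h1 hi12
        (hi22.mono fun x hx => ⟨hx.2, fun hh => hx.1 hh.1⟩)
        h2 hS₁inf
        (hp₂.mono (Set.subset_diff.mpr ⟨hp₂p.trans hpsub, hp₂S⟩))
      have hsH : s ∈ H := memH2 s hs0
      refine ⟨k' * s * k', K.mul_mem (K.mul_mem hk'K (hHK hsH)) hk'K, ?_⟩
      have himgT : ⇑(k' * s * k') '' Ω₁ = ⇑k' '' (⇑s '' B') := by
        rw [Equiv.Perm.coe_mul, Set.image_comp, ← hB', Equiv.Perm.coe_mul, Set.image_comp]
      have hB'dec : B' = (B' ∩ Ω₁) ∪ (B' ∩ Ω₂) := by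
        rw [← Set.inter_union_distrib_left, hu, Set.inter_univ]
      have hsB' : ⇑s '' B' = (⇑s '' (B' ∩ Ω₁)) ∪ S₁ := by
        conv_lhs => rw [hB'dec]
        rw [Set.image_union, hs1]
      have hkp : ⇑k' '' p = B' ∩ Ω₁ := by rw [hp, invc1]
      have hkq : ⇑k' '' q = B' ∩ Ω₂ := by rw [hq, invc1]
      -- piece (1)
      have c1 : ⇑k' '' p₁ ⊆ ⇑(k' * s * k') '' Ω₁ := by
        rw [himgT, hsB']
        exact Set.image_mono (Set.subset_union_left.trans Set.subset_union_right)
      have c1' : ⇑k' '' p₁ ⊆ Ω₁ :=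
        ((Set.image_mono hp₁p).trans (hkp ▸ Set.inter_subset_right))
      -- piece (2)
      have c2 : ⇑k' '' q₁ ⊆ ⇑(k' * s * k') '' Ω₁ := by
        rw [himgT, hsB']
        exact Set.image_mono (Set.subset_union_right.trans Set.subset_union_right)
      have c2' : ⇑k' '' q₁ ⊆ Ω₂ :=
        ((Set.image_mono hq₁q).trans (hkq ▸ Set.inter_subset_right))
      -- pieces (3),(4): disjointness
      have hsB'O2 : ⇑s '' (B' ∩ Ω₁) ⊆ Ω₂ :=
        (Set.image_mono (f := ⇑s) (Set.inter_subset_right : B' ∩ Ω₁ ⊆ Ω₁)).trans (le_of_eq hs0)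
      have c3 : ⇑k' '' p₂ ⊆ (⇑(k' * s * k') '' Ω₁)ᶜ := by
        rw [himgT]
        have hdisj : Disjoint p₂ (⇑s '' B') := by
          rw [hsB']
          exact Set.disjoint_union_right.mpr
            ⟨(hd.mono (hp₂p.trans hpsub) hsB'O2), hp₂S⟩
        have := Set.disjoint_image_of_injective k'.injective hdisj
        intro x hx hx'
        exact this.le_bot ⟨hx, hx'⟩
      have c3' : ⇑k' '' p₂ ⊆ Ω₁ :=
        ((Set.image_mono hp₂p).trans (hkp ▸ Set.inter_subset_right))
      have c4 : ⇑k' '' q₂ ⊆ (⇑(k' * s * k') '' Ω₁)ᶜ := by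
        rw [himgT]
        have hdisj : Disjoint q₂ (⇑s '' B') := by
          rw [hsB']
          exact Set.disjoint_union_right.mpr
            ⟨(hd.mono (hq₂q.trans hqsub) hsB'O2), hq₂S⟩
        have := Set.disjoint_image_of_injective k'.injective hdisj
        intro x hx hx'
        exact this.le_bot ⟨hx, hx'⟩
      have c4' : ⇑k' '' q₂ ⊆ Ω₂ :=
        ((Set.image_mono hq₂q).trans (hkq ▸ Set.inter_subset_right))
      exact ⟨(imginf k' p₁ hp₁).mono (Set.subset_inter c1 c1'),
        (imginf k' q₁ hq₁).mono (Set.subset_inter c2 c2'),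
        (imginf k' p₂ hp₂).mono (Set.subset_inter c3 c3'),
        (imginf k' q₂ hq₂).mono (Set.subset_inter c4 c4')⟩
    -- basic decompositions for B = k '' Ω₁
    set B := ⇑k '' Ω₁ with hB
    have hBinf : B.Infinite := imginf k Ω₁ h1
    have hBc : Bᶜ = ⇑k '' Ω₂ := by rw [hc, imgc, hB]
    have hBcinf : Bᶜ.Infinite := by rw [hBc]; exact imginf k Ω₂ h2
    have hu1 : (B ∩ Ω₁) ∪ (Bᶜ ∩ Ω₁) = Ω₁ := by
      ext x
      simp only [Set.mem_union, Set.mem_inter_iff, Set.mem_compl_iff]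
      tauto
    have hu2 : (B ∩ Ω₂) ∪ (Bᶜ ∩ Ω₂) = Ω₂ := by
      ext x
      simp only [Set.mem_union, Set.mem_inter_iff, Set.mem_compl_iff]
      tauto
    have hu3 : (B ∩ Ω₁) ∪ (B ∩ Ω₂) = B := by
      rw [← Set.inter_union_distrib_left, hu, Set.inter_univ]
    have hu4 : (Bᶜ ∩ Ω₁) ∪ (Bᶜ ∩ Ω₂) = Bᶜ := by
      rw [← Set.inter_union_distrib_left, hu, Set.inter_univ]
    -- k ∉ H gives infinite symmetric differences
    have hkinf : (symmDiff B Ω₁).Infinite ∧ (symmDiff B Ω₂).Infinite := by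
      rw [memH k] at hkH
      push_neg at hkH
      exact ⟨hkH.1, hkH.2⟩
    have hsd1 : symmDiff B Ω₁ = (B ∩ Ω₂) ∪ (Bᶜ ∩ Ω₁) := by
      rw [Set.symmDiff_def]
      ext x
      simp only [Set.mem_union, Set.mem_diff, Set.mem_inter_iff, Set.mem_compl_iff, hc]
      tauto
    have hsd2 : symmDiff B Ω₂ = (B ∩ Ω₁) ∪ (Bᶜ ∩ Ω₂) := by
      rw [Set.symmDiff_def]
      ext x
      simp only [Set.mem_union, Set.mem_diff, Set.mem_inter_iff, Set.mem_compl_iff, hc]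
      tauto
    have hs1inf : ((B ∩ Ω₂) ∪ (Bᶜ ∩ Ω₁)).Infinite := hsd1 ▸ hkinf.1
    have hs2inf : ((B ∩ Ω₁) ∪ (Bᶜ ∩ Ω₂)).Infinite := hsd2 ▸ hkinf.2
    -- swap permutation
    obtain ⟨s₀, hs₀1, hs₀2⟩ := exists_perm_two Ω₁ Ω₂ Ω₂ Ω₁ hd hd.symm hu
      (by rw [Set.union_comm]; exact hu) h1 h2 h2 h1
    have hs₀H : s₀ ∈ H := memH2 s₀ hs₀1
    -- obtain t ∈ K with all four pieces infinite
    obtain ⟨t, htK, ht11, ht12, ht21, ht22⟩ :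
        ∃ t : Equiv.Perm ℕ, t ∈ K ∧ ((⇑t '' Ω₁) ∩ Ω₁).Infinite ∧
          ((⇑t '' Ω₁) ∩ Ω₂).Infinite ∧ ((⇑t '' Ω₁)ᶜ ∩ Ω₁).Infinite ∧
          ((⇑t '' Ω₁)ᶜ ∩ Ω₂).Infinite := by
      by_cases f11 : (B ∩ Ω₁).Finite
      · -- use k * s₀ ; image is Bᶜ
        have i21 : (Bᶜ ∩ Ω₁).Infinite := inf_right (by rw [hu1]; exact h1) f11
        have i12 : (B ∩ Ω₂).Infinite := inf_right (by rw [hu3]; exact hBinf) f11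
        have i22 : (Bᶜ ∩ Ω₂).Infinite := inf_right hs2inf f11
        have himg : ⇑(k * s₀) '' Ω₁ = Bᶜ := by
          rw [Equiv.Perm.coe_mul, Set.image_comp, hs₀1, hBc]
        apply lemE (k * s₀) (K.mul_mem hkK (hHK hs₀H))
        · rw [himg]; exact i21
        · rw [himg]; exact i22
        · rw [himg, compl_compl]; exact i12
      · by_cases f12 : (B ∩ Ω₂).Finite
        · -- use k⁻¹
          have i11 : (B ∩ Ω₁).Infinite := f11
          have i22 : (Bᶜ ∩ Ω₂).Infinite := inf_right (by rw [hu2]; exact h2) f12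
          have i21 : (Bᶜ ∩ Ω₁).Infinite := inf_right hs1inf f12
          have e1 : ⇑k⁻¹ '' Ω₁ ∩ Ω₁ = ⇑k⁻¹ '' (Ω₁ ∩ B) := by
            rw [Set.image_inter k⁻¹.injective]
            congr 1
            rw [hB, invc2]
          have e2 : ⇑k⁻¹ '' Ω₁ ∩ Ω₂ = ⇑k⁻¹ '' (Ω₁ ∩ Bᶜ) := by
            rw [Set.image_inter k⁻¹.injective]
            congr 1
            rw [hBc, invc2]
          have e3 : (⇑k⁻¹ '' Ω₁)ᶜ ∩ Ω₂ = ⇑k⁻¹ '' (Ω₂ ∩ Bᶜ) := by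
            rw [← imgc, Set.image_inter k⁻¹.injective]
            congr 1
            · rw [hc]
            · rw [hBc, invc2]
          apply lemE k⁻¹ (K.inv_mem hkK)
          · rw [e1]; exact imginf _ _ (by rw [Set.inter_comm]; exact i11)
          · rw [e2]; exact imginf _ _ (by rw [Set.inter_comm]; exact i21)
          · rw [e3]; exact imginf _ _ (by rw [Set.inter_comm]; exact i22)
        · by_cases f22 : (Bᶜ ∩ Ω₂).Finite
          · -- use s₀ * k
            have i11 : (B ∩ Ω₁).Infinite := f11
            have i12 : (B ∩ Ω₂).Infinite := f12
            have i21 : (Bᶜ ∩ Ω₁).Infinite := inf_left (by rw [hu4]; exact hBcinf) f22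
            have e0 : ⇑(s₀ * k) '' Ω₁ = ⇑s₀ '' B := by
              rw [Equiv.Perm.coe_mul, Set.image_comp, hB]
            have e1 : ⇑s₀ '' B ∩ Ω₁ = ⇑s₀ '' (B ∩ Ω₂) := by
              rw [Set.image_inter s₀.injective, hs₀2]
            have e2 : ⇑s₀ '' B ∩ Ω₂ = ⇑s₀ '' (B ∩ Ω₁) := by
              rw [Set.image_inter s₀.injective, hs₀1]
            have e3 : (⇑s₀ '' B)ᶜ ∩ Ω₂ = ⇑s₀ '' (Bᶜ ∩ Ω₁) := by
              rw [← imgc, Set.image_inter s₀.injective, hs₀1]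
            apply lemE (s₀ * k) (K.mul_mem (hHK hs₀H) hkK)
            · rw [e0, e1]; exact imginf _ _ i12
            · rw [e0, e2]; exact imginf _ _ i11
            · rw [e0, e3]; exact imginf _ _ i21
          · -- all needed pieces infinite; use k itself
            apply lemE k hkK f11 f12 f22
    -- every all-four permutation is in K
    have allfour_mem : ∀ g : Equiv.Perm ℕ,
        ((⇑g '' Ω₁) ∩ Ω₁).Infinite → ((⇑g '' Ω₁) ∩ Ω₂).Infinite →
        ((⇑g '' Ω₁)ᶜ ∩ Ω₁).Infinite → ((⇑g '' Ω₁)ᶜ ∩ Ω₂).Infinite → g ∈ K := by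
      intro g hg11 hg12 hg21 hg22
      set T := ⇑t '' Ω₁ with hT
      set G := ⇑g '' Ω₁ with hG
      obtain ⟨π, hπ1, hπ2, hπ3, hπ4⟩ := exists_perm_cross T Ω₁ G Ω₁
        ht11 (by rw [← hc]; exact ht12) ht21 (by rw [← hc]; exact ht22)
        hg11 (by rw [← hc]; exact hg12) hg21 (by rw [← hc]; exact hg22)
      have hdec1 : (T ∩ Ω₁) ∪ (Tᶜ ∩ Ω₁) = Ω₁ := by
        ext x
        simp only [Set.mem_union, Set.mem_inter_iff, Set.mem_compl_iff]
        tauto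
      have hdec1' : (G ∩ Ω₁) ∪ (Gᶜ ∩ Ω₁) = Ω₁ := by
        ext x
        simp only [Set.mem_union, Set.mem_inter_iff, Set.mem_compl_iff]
        tauto
      have hdec2 : (T ∩ Ω₁) ∪ (T ∩ Ω₁ᶜ) = T := by
        ext x
        simp only [Set.mem_union, Set.mem_inter_iff, Set.mem_compl_iff]
        tauto
      have hdec2' : (G ∩ Ω₁) ∪ (G ∩ Ω₁ᶜ) = G := by
        ext x
        simp only [Set.mem_union, Set.mem_inter_iff, Set.mem_compl_iff]
        tauto
      have hπΩ : ⇑π '' Ω₁ = Ω₁ := by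
        conv_lhs => rw [← hdec1]
        rw [Set.image_union, hπ1, hπ3, hdec1']
      have hπH : π ∈ H := memH1 π hπΩ
      have hπT : ⇑(π * t) '' Ω₁ = G := by
        rw [Equiv.Perm.coe_mul, Set.image_comp, ← hT]
        conv_lhs => rw [← hdec2]
        rw [Set.image_union, hπ1, hπ2, hdec2']
      exact keylem (π * t) g (K.mul_mem (hHK hπH) htK) (by rw [hπT])
    -- conclude K = ⊤
    refine (Subgroup.eq_top_iff' K).mpr fun g => ?_
    set G := ⇑g '' Ω₁ with hG
    have hGinf : G.Infinite := imginf g Ω₁ h1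
    have hGc : Gᶜ = ⇑g '' Ω₂ := by rw [hc, imgc, hG]
    have hGcinf : Gᶜ.Infinite := by rw [hGc]; exact imginf g Ω₂ h2
    obtain ⟨M, m1, m2, m3, m4, n1, n2, n3, n4⟩ :=
      exists_M Ω₁ Ω₂ G h1 h2 hu hd hGinf hGcinf
    -- w : maps Ω₁ to M
    have hMinf : M.Infinite := m1.mono Set.inter_subset_left
    have hMcinf : Mᶜ.Infinite := m3.mono Set.inter_subset_left
    obtain ⟨w, hw1, hw2⟩ := exists_perm_two Ω₁ Ω₂ M Mᶜ hd disjoint_compl_right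
      hu (Set.union_compl_self M) h1 h2 hMinf hMcinf
    have hwK : w ∈ K := by
      apply allfour_mem w <;> rw [hw1]
      · exact m1
      · exact m2
      · exact m3
      · exact m4
    -- v : cross permutation from (M, Ω₁) to (G, M)
    obtain ⟨v, hv1, hv2, hv3, hv4⟩ := exists_perm_cross M Ω₁ G M
      m1 (by rw [← hc]; exact m2) m3 (by rw [← hc]; exact m4)
      n1 n2 n3 n4
    have hvΩ : ⇑v '' Ω₁ = M := by
      have hdec : (M ∩ Ω₁) ∪ (Mᶜ ∩ Ω₁) = Ω₁ := by
        ext x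
        simp only [Set.mem_union, Set.mem_inter_iff, Set.mem_compl_iff]
        tauto
      have hdec' : (G ∩ M) ∪ (Gᶜ ∩ M) = M := by
        ext x
        simp only [Set.mem_union, Set.mem_inter_iff, Set.mem_compl_iff]
        tauto
      conv_lhs => rw [← hdec]
      rw [Set.image_union, hv1, hv3, hdec']
    have hvM : ⇑v '' M = G := by
      have hdec : (M ∩ Ω₁) ∪ (M ∩ Ω₁ᶜ) = M := by
        ext x
        simp only [Set.mem_union, Set.mem_inter_iff, Set.mem_compl_iff]
        tauto
      have hdec' : (G ∩ M) ∪ (G ∩ Mᶜ) = G := by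
        ext x
        simp only [Set.mem_union, Set.mem_inter_iff, Set.mem_compl_iff]
        tauto
      conv_lhs => rw [← hdec]
      rw [Set.image_union, hv1, hv2, hdec']
    have hvK : v ∈ K := by
      apply allfour_mem v <;> rw [hvΩ]
      · exact m1
      · exact m2
      · exact m3
      · exact m4
    have hvwK : v * w ∈ K := K.mul_mem hvK hwK
    have hvw : ⇑(v * w) '' Ω₁ = G := by
      rw [Equiv.Perm.coe_mul, Set.image_comp, hw1, hvM]
    exact keylem (v * w) g hvwK (by rw [hvw])
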